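/- Fix H > 0, W > 0, n ≥ 1 and L* ≥ 0. Let x = HW²/n and define η = W / (4HW + 2√(4H²W² + 2HL*n)), which satisfies 0 < 4ηH < 1. Then L*/(1 − 4ηH) + W²/(2η(1 − 4ηH)n) ≤ L* + 2√(2xL*) + 8x. -/

import Mathlib

/-- Algebraic simplification behind the optimistic online-to-batch rate: with
`x = HW²/n` and `η = W/(4HW + 2√(4H²W² + 2HL*n))` (which satisfies `0 < 4ηH < 1`),
`L*/(1−4ηH) + W²/(2η(1−4ηH)n) ≤ L* + 2√(2xL*) + 8x`. -/
theorem optimistic_rate_algebra (H W Lstar : ℝ) (n : ℕ)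
    (hH : 0 < H) (hW : 0 < W) (hn : 1 ≤ n) (hL : 0 ≤ Lstar) :
    let x : ℝ := H * W ^ 2 / n
    let η : ℝ := W / (4 * H * W + 2 * Real.sqrt (4 * H ^ 2 * W ^ 2 + 2 * H * Lstar * n))
    0 < 4 * η * H ∧ 4 * η * H < 1 ∧
      Lstar / (1 - 4 * η * H) + W ^ 2 / (2 * η * (1 - 4 * η * H) * n)
        ≤ Lstar + 2 * Real.sqrt (2 * x * Lstar) + 8 * x := by
  intro x η
  have hnpos : (0:ℝ) < n := by exact_mod_cast hn
  set S : ℝ := Real.sqrt (4 * H ^ 2 * W ^ 2 + 2 * H * Lstar * n) with hSdef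
  have harg : (0:ℝ) ≤ 4 * H ^ 2 * W ^ 2 + 2 * H * Lstar * n := by positivity
  have hSsq : S ^ 2 = 4 * H ^ 2 * W ^ 2 + 2 * H * Lstar * n := Real.sq_sqrt harg
  have hSge : 2 * H * W ≤ S := by
    have h1 : Real.sqrt ((2*H*W)^2) ≤ S := by
      apply Real.sqrt_le_sqrt; nlinarith [mul_nonneg (mul_nonneg hL hnpos.le) hH.le]
    rwa [Real.sqrt_sq (by positivity)] at h1
  have hSpos : 0 < S := lt_of_lt_of_le (by positivity) hSge
  have hD : 0 < 4 * H * W + 2 * S := by nlinarith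
  have hη : η = W / (4 * H * W + 2 * S) := rfl
  have hηpos : 0 < η := by rw [hη]; positivity
  refine ⟨by positivity, ?_, ?_⟩
  · have he : 4 * η * H = 4 * H * W / (4 * H * W + 2 * S) := by rw [hη]; ring
    rw [he, div_lt_one hD]
    nlinarith
  · have h1 : 1 - 4 * η * H = 2 * S / (4 * H * W + 2 * S) := by
      rw [hη]; field_simp; ring
    have hLHS : Lstar / (1 - 4 * η * H) + W ^ 2 / (2 * η * (1 - 4 * η * H) * n)
        = Lstar + 4 * H * W ^ 2 / n + 2 * W * S / n := by
      rw [h1, hη]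
      field_simp
      linear_combination (-4 * W) * hSsq
    -- bound S and the sqrt term
    have hr2 : (Real.sqrt (2 * H * Lstar * n)) ^ 2 = 2 * H * Lstar * n :=
      Real.sq_sqrt (by positivity)
    have hSle : S ≤ 2 * H * W + Real.sqrt (2 * H * Lstar * n) := by
      rw [hSdef]
      have h := Real.sqrt_le_sqrt (show 4 * H ^ 2 * W ^ 2 + 2 * H * Lstar * (n:ℝ)
          ≤ (2 * H * W + Real.sqrt (2 * H * Lstar * n)) ^ 2 by
        nlinarith [hr2, mul_nonneg (by positivity : (0:ℝ) ≤ 4 * H * W) (Real.sqrt_nonneg (2 * H * Lstar * (n:ℝ)))])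
      rwa [Real.sqrt_sq (by positivity)] at h
    have hsqrt_eq : Real.sqrt (2 * x * Lstar) = W / n * Real.sqrt (2 * H * Lstar * n) := by
      rw [show (2 * x * Lstar) = (W/n)^2 * (2 * H * Lstar * n) by
        show 2 * (H * W ^ 2 / n) * Lstar = _; field_simp]
      rw [Real.sqrt_mul (by positivity), Real.sqrt_sq (by positivity)]
    have hx : x = H * W ^ 2 / n := rfl
    rw [hLHS, hx, hsqrt_eq]
    have hr : 0 ≤ Real.sqrt (2 * H * Lstar * n) := Real.sqrt_nonneg _
    calc Lstar + 4 * H * W ^ 2 / n + 2 * W * S / n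
        ≤ Lstar + 4 * H * W ^ 2 / n
            + 2 * W * (2 * H * W + Real.sqrt (2 * H * Lstar * n)) / n := by gcongr
      _ = Lstar + 2 * (W / n * Real.sqrt (2 * H * Lstar * n)) + 8 * (H * W ^ 2 / n) := by
          ring
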